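/- Let n ≥ 3 and let A ⊆ [n] be nonempty with w = max A satisfying 1 < w < n−1, and set A' = A \ {w}. Then f_n(A) = 2·f_{n−1}(A) + f_{n−1}(A') − Σ_{j=w−1}^{n−2} f_j(A'). -/

import Mathlib

/-- `σ` is in the set-alternating domain of `A` on alternatives `{1,…,n}`
(alternative `m` is represented by the index `m-1 : Fin n`; `σ x` is the rank
of alternative `x`, smaller rank = better). For every triple `i < j < k`:
if the middle alternative `j` (whose 1-based name is `j+1`) is in `A`, then
`i` is never ranked below both `j` and `k` (1N3); otherwise `k` is never
ranked above both `i` and `j` (3N1). -/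
def inSetAltDomain (n : ℕ) (A : Finset ℕ) (σ : Equiv.Perm (Fin n)) : Prop :=
  ∀ i j k : Fin n, i < j → j < k →
    (((j : ℕ) + 1 ∈ A) → ¬ (σ j < σ i ∧ σ k < σ i)) ∧
    (((j : ℕ) + 1 ∉ A) → ¬ (σ k < σ i ∧ σ k < σ j))

/-- The set-alternating domain `D_n(A)`. -/
def setAltDomain (n : ℕ) (A : Finset ℕ) : Set (Equiv.Perm (Fin n)) :=
  {σ | inSetAltDomain n A σ}

/-- `f_n(A)`, the cardinality of `D_n(A)`. -/
noncomputable def fsize (n : ℕ) (A : Finset ℕ) : ℕ := (setAltDomain n A).ncard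

open Finset Equiv

open Classical in
noncomputable def Dfin (m : ℕ) (X : Finset ℕ) : Finset (Equiv.Perm (Fin m)) :=
  Finset.univ.filter (fun σ => inSetAltDomain m X σ)

lemma mem_Dfin {m : ℕ} {X : Finset ℕ} {σ : Equiv.Perm (Fin m)} :
    σ ∈ Dfin m X ↔ inSetAltDomain m X σ := by
  classical
  simp [Dfin]

lemma fsize_eq_card (m : ℕ) (X : Finset ℕ) : fsize m X = (Dfin m X).card := by
  have h : setAltDomain m X = ↑(Dfin m X) := by
    ext σ; simp [setAltDomain, mem_Dfin, Set.mem_setOf_eq]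
  rw [fsize, h, Set.ncard_coe_finset]

/-- indices `≥ t` appear in increasing order -/
def Cc {m : ℕ} (t : ℕ) (π : Equiv.Perm (Fin m)) : Prop :=
  ∀ y z : Fin m, t ≤ (y : ℕ) → y < z → π y < π z

/-- indices `≥ t` appear in increasing order at the bottom -/
def Tl {m : ℕ} (t : ℕ) (π : Equiv.Perm (Fin m)) : Prop :=
  ∀ y z : Fin m, y < z → t ≤ (z : ℕ) → π y < π z

lemma Tl.cc {m t : ℕ} {π : Equiv.Perm (Fin m)} (h : Tl t π) : Cc t π :=
  fun y z hy hyz => h y z hyz (le_trans hy (le_of_lt hyz))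

/-- insert alternative `a` at the bottom (rank `last`), others ranked by `π`. -/
def ins {m : ℕ} (a : Fin (m + 1)) (π : Equiv.Perm (Fin m)) : Equiv.Perm (Fin (m + 1)) :=
  (finSuccEquiv' a).trans ((Equiv.optionCongr π).trans (finSuccEquiv' (Fin.last m)).symm)

@[simp] lemma ins_apply_self {m : ℕ} (a : Fin (m + 1)) (π : Equiv.Perm (Fin m)) :
    ins a π a = Fin.last m := by
  simp [ins, finSuccEquiv'_at, finSuccEquiv'_symm_none]

@[simp] lemma ins_apply_succAbove {m : ℕ} (a : Fin (m + 1)) (π : Equiv.Perm (Fin m))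
    (y : Fin m) : ins a π (a.succAbove y) = (π y).castSucc := by
  simp [ins, finSuccEquiv'_succAbove, finSuccEquiv'_symm_some, Fin.succAbove_last]

lemma ins_injective {m : ℕ} (a : Fin (m + 1)) : Function.Injective (ins (m := m) a) := by
  intro π1 π2 h
  apply Equiv.ext
  intro y
  have h1 := congrArg (fun (e : Equiv.Perm (Fin (m+1))) => e (a.succAbove y)) h
  simp only [ins_apply_succAbove] at h1
  exact Fin.castSucc_injective _ h1

/-- delete the alternative `a` (which must have rank `last`). -/
noncomputable def del {m : ℕ} (a : Fin (m + 1)) (σ : Equiv.Perm (Fin (m + 1))) :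
    Equiv.Perm (Fin m) :=
  Equiv.removeNone ((finSuccEquiv' a).symm.trans (σ.trans (finSuccEquiv' (Fin.last m))))

lemma ins_del {m : ℕ} (a : Fin (m + 1)) (σ : Equiv.Perm (Fin (m + 1)))
    (h : σ a = Fin.last m) : ins a (del a σ) = σ := by
  set e : Option (Fin m) ≃ Option (Fin m) :=
    (finSuccEquiv' a).symm.trans (σ.trans (finSuccEquiv' (Fin.last m))) with he
  have hnone : e none = none := by
    simp [he, finSuccEquiv'_symm_none, h, finSuccEquiv'_at]
  ext x
  rcases eq_or_ne x a with rfl | hx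
  · rw [ins_apply_self, h]
  · obtain ⟨y, rfl⟩ := Fin.exists_succAbove_eq hx
    rw [ins_apply_succAbove]
    have hsome : e (some y) ≠ none := by
      intro hc
      have : (some y : Option (Fin m)) = none := e.injective (hc.trans hnone.symm)
      simp at this
    obtain ⟨x', hx'⟩ := Option.ne_none_iff_exists'.mp hsome
    have h1 : some (Equiv.removeNone e y) = e (some y) := Equiv.removeNone_some e ⟨x', hx'⟩
    have h2 : e (some y) = finSuccEquiv' (Fin.last m) (σ (a.succAbove y)) := by
      simp [he, finSuccEquiv'_symm_some]
    have h3 := congrArg (finSuccEquiv' (Fin.last m)).symm (h1.trans h2)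
    rw [Equiv.symm_apply_apply] at h3
    rw [← h3, finSuccEquiv'_symm_some, Fin.succAbove_last]
    rfl

lemma del_ins {m : ℕ} (a : Fin (m + 1)) (π : Equiv.Perm (Fin m)) :
    del a (ins a π) = π :=
  ins_injective a (ins_del a (ins a π) (ins_apply_self a π))

lemma exists_ins {m : ℕ} {a : Fin (m + 1)} {σ : Equiv.Perm (Fin (m + 1))}
    (h : σ a = Fin.last m) : ∃ π, ins a π = σ := ⟨del a σ, ins_del a σ h⟩
lemma succAbove_val {m : ℕ} (a : Fin (m + 1)) (y : Fin m) :
    ((a.succAbove y : Fin (m + 1)) : ℕ) = if (y : ℕ) < (a : ℕ) then (y : ℕ) else (y : ℕ) + 1 := by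
  rcases lt_or_ge ((y : ℕ)) ((a : ℕ)) with h | h
  · rw [Fin.succAbove_of_castSucc_lt _ _ (by simpa [Fin.lt_def] using h), if_pos h]
    simp
  · rw [Fin.succAbove_of_le_castSucc _ _ (by simpa [Fin.le_def] using h), if_neg (not_lt.mpr h)]
    simp

lemma ins_mem_iff {m : ℕ} (a : Fin (m + 1)) (X : Finset ℕ) (hX : ∀ x ∈ X, x ≤ (a : ℕ) + 1)
    (π : Equiv.Perm (Fin m)) :
    inSetAltDomain (m + 1) X (ins a π) ↔
      inSetAltDomain m (X.erase ((a : ℕ) + 1)) π ∧ Cc (a : ℕ) π ∧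
        (((a : ℕ) + 1 ∉ X) → Tl (a : ℕ) π) := by
  constructor
  · intro H
    have hCc : Cc (a : ℕ) π := by
      intro y z hy hyz
      have hvy : ((a.succAbove y : Fin (m+1)) : ℕ) = (y : ℕ) + 1 := by
        rw [succAbove_val, if_neg (not_lt.mpr hy)]
      have hja : a < a.succAbove y := by rw [Fin.lt_def, hvy]; omega
      have hjk : a.succAbove y < a.succAbove z := (Fin.strictMono_succAbove a) hyz
      have hname : ((a.succAbove y : Fin (m+1)) : ℕ) + 1 ∉ X := by
        intro hmem; have := hX _ hmem; omega
      have H3 := (H a (a.succAbove y) (a.succAbove z) hja hjk).2 hname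
      simp only [ins_apply_self, ins_apply_succAbove] at H3
      have h4 : ¬ ((π z).castSucc < (π y).castSucc) :=
        fun hc => H3 ⟨Fin.castSucc_lt_last _, hc⟩
      rw [Fin.castSucc_lt_castSucc_iff] at h4
      exact lt_of_le_of_ne (Fin.not_lt.mp h4) (π.injective.ne hyz.ne)
    refine ⟨?_, hCc, ?_⟩
    · intro y1 y2 y3 h12 h23
      have H' := H (a.succAbove y1) (a.succAbove y2) (a.succAbove y3)
        ((Fin.strictMono_succAbove a) h12) ((Fin.strictMono_succAbove a) h23)
      simp only [ins_apply_succAbove] at H'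
      constructor
      · intro hmem
        have hy2 : (y2 : ℕ) + 1 ∈ X := Finset.mem_of_mem_erase hmem
        have hne : (y2 : ℕ) + 1 ≠ (a : ℕ) + 1 := Finset.ne_of_mem_erase hmem
        have hlt : (y2 : ℕ) < (a : ℕ) := by have := hX _ hy2; omega
        have hnm : ((a.succAbove y2 : Fin (m+1)) : ℕ) + 1 ∈ X := by
          rw [succAbove_val, if_pos hlt]; exact hy2
        have h5 := H'.1 hnm
        rintro ⟨h1, h2⟩
        exact h5 ⟨Fin.castSucc_lt_castSucc_iff.mpr h1, Fin.castSucc_lt_castSucc_iff.mpr h2⟩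
      · intro hmem
        have hnm : ((a.succAbove y2 : Fin (m+1)) : ℕ) + 1 ∉ X := by
          rw [succAbove_val]; split_ifs with h
          · intro hc; exact hmem (Finset.mem_erase.mpr ⟨by omega, hc⟩)
          · intro hc; have := hX _ hc; omega
        have h5 := H'.2 hnm
        rintro ⟨h1, h2⟩
        exact h5 ⟨Fin.castSucc_lt_castSucc_iff.mpr h1, Fin.castSucc_lt_castSucc_iff.mpr h2⟩
    · intro hnot y z hyz hz
      rcases lt_or_ge ((y : ℕ)) ((a : ℕ)) with hy | hy
      · have hvy : ((a.succAbove y : Fin (m+1)) : ℕ) = (y : ℕ) := by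
          rw [succAbove_val, if_pos hy]
        have hvz : ((a.succAbove z : Fin (m+1)) : ℕ) = (z : ℕ) + 1 := by
          rw [succAbove_val, if_neg (not_lt.mpr hz)]
        have hia : a.succAbove y < a := by rw [Fin.lt_def, hvy]; exact hy
        have hak : a < a.succAbove z := by rw [Fin.lt_def, hvz]; omega
        have H' := (H (a.succAbove y) a (a.succAbove z) hia hak).2 hnot
        simp only [ins_apply_self, ins_apply_succAbove] at H'
        have h4 : ¬ ((π z).castSucc < (π y).castSucc) :=
          fun hc => H' ⟨hc, Fin.castSucc_lt_last _⟩
        rw [Fin.castSucc_lt_castSucc_iff] at h4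
        exact lt_of_le_of_ne (Fin.not_lt.mp h4) (π.injective.ne hyz.ne)
      · exact hCc y z hy hyz
  · rintro ⟨hD, hC, hT⟩ i j k hij hjk
    rcases eq_or_ne j a with heq | hja
    · rw [heq] at hij hjk ⊢
      obtain ⟨y, rfl⟩ := Fin.exists_succAbove_eq hij.ne
      obtain ⟨z, rfl⟩ := Fin.exists_succAbove_eq hjk.ne'
      have hy : (y : ℕ) < (a : ℕ) := by
        have h1 := succAbove_val a y
        have h2 : ((a.succAbove y : Fin (m+1)) : ℕ) < (a : ℕ) := hij
        split_ifs at h1 with h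
        · exact h
        · omega
      have hz : (a : ℕ) ≤ (z : ℕ) := by
        have h1 := succAbove_val a z
        have h2 : (a : ℕ) < ((a.succAbove z : Fin (m+1)) : ℕ) := hjk
        split_ifs at h1 with h
        · omega
        · omega
      constructor
      · intro _
        simp only [ins_apply_self, ins_apply_succAbove]
        rintro ⟨h1, _⟩
        exact absurd h1 (Fin.not_lt.mpr (Fin.le_last _))
      · intro hmem
        simp only [ins_apply_self, ins_apply_succAbove]
        rintro ⟨h1, _⟩
        have hlt := hT hmem y z (by rw [Fin.lt_def]; omega) hz
        rw [Fin.castSucc_lt_castSucc_iff] at h1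
        exact absurd h1 (not_lt.mpr hlt.le)
    · rcases eq_or_ne i a with heq | hia
      · rw [heq] at hij ⊢
        obtain ⟨y, rfl⟩ := Fin.exists_succAbove_eq hja
        obtain ⟨z, rfl⟩ := Fin.exists_succAbove_eq (show k ≠ a from (hij.trans hjk).ne')
        have hy : (a : ℕ) ≤ (y : ℕ) := by
          have h1 := succAbove_val a y
          have h2 : (a : ℕ) < ((a.succAbove y : Fin (m+1)) : ℕ) := hij
          split_ifs at h1 with h
          · omega
          · omega
        have hyz : y < z := Fin.succAbove_lt_succAbove_iff.mp hjk
        constructor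
        · intro hmem
          exfalso
          have h1 := succAbove_val a y
          rw [if_neg (not_lt.mpr hy)] at h1
          rw [h1] at hmem
          have := hX _ hmem
          omega
        · intro _
          simp only [ins_apply_self, ins_apply_succAbove]
          rintro ⟨_, h2⟩
          have := hC y z hy hyz
          rw [Fin.castSucc_lt_castSucc_iff] at h2
          exact absurd h2 (not_lt.mpr this.le)
      · rcases eq_or_ne k a with heq | hka
        · rw [heq] at hjk ⊢
          obtain ⟨y, rfl⟩ := Fin.exists_succAbove_eq hia
          obtain ⟨z, rfl⟩ := Fin.exists_succAbove_eq hja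
          constructor
          · intro _
            simp only [ins_apply_self, ins_apply_succAbove]
            rintro ⟨_, h2⟩
            exact absurd h2 (Fin.not_lt.mpr (Fin.le_last _))
          · intro _
            simp only [ins_apply_self, ins_apply_succAbove]
            rintro ⟨h1, _⟩
            exact absurd h1 (Fin.not_lt.mpr (Fin.le_last _))
        · obtain ⟨y1, rfl⟩ := Fin.exists_succAbove_eq hia
          obtain ⟨y2, rfl⟩ := Fin.exists_succAbove_eq hja
          obtain ⟨y3, rfl⟩ := Fin.exists_succAbove_eq hka
          have h12 : y1 < y2 := Fin.succAbove_lt_succAbove_iff.mp hij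
          have h23 : y2 < y3 := Fin.succAbove_lt_succAbove_iff.mp hjk
          have HD := hD y1 y2 y3 h12 h23
          constructor
          · intro hmem
            have hy2a : (y2 : ℕ) < (a : ℕ) := by
              by_contra hc
              have h1 := succAbove_val a y2
              rw [if_neg hc] at h1
              rw [h1] at hmem
              have := hX _ hmem
              omega
            have hmem' : (y2 : ℕ) + 1 ∈ X.erase ((a : ℕ) + 1) := by
              refine Finset.mem_erase.mpr ⟨by omega, ?_⟩
              rwa [succAbove_val, if_pos hy2a] at hmem
            have h5 := HD.1 hmem'
            simp only [ins_apply_succAbove]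
            rintro ⟨h1, h2⟩
            exact h5 ⟨Fin.castSucc_lt_castSucc_iff.mp h1, Fin.castSucc_lt_castSucc_iff.mp h2⟩
          · intro hmem
            have hmem' : (y2 : ℕ) + 1 ∉ X.erase ((a : ℕ) + 1) := by
              intro hc
              obtain ⟨hne, hcX⟩ := Finset.mem_erase.mp hc
              have hy2a : (y2 : ℕ) < (a : ℕ) := by have := hX _ hcX; omega
              exact hmem (by rwa [succAbove_val, if_pos hy2a])
            have h5 := HD.2 hmem'
            simp only [ins_apply_succAbove]
            rintro ⟨h1, h2⟩
            exact h5 ⟨Fin.castSucc_lt_castSucc_iff.mp h1, Fin.castSucc_lt_castSucc_iff.mp h2⟩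
open Classical in
lemma fiber_card {m : ℕ} (a : Fin (m + 1)) (X : Finset ℕ) (hX : ∀ x ∈ X, x ≤ (a : ℕ) + 1)
    (Q : Equiv.Perm (Fin (m + 1)) → Prop) (Q' : Equiv.Perm (Fin m) → Prop)
    (hQ : ∀ π, Q (ins a π) ↔ Q' π) :
    ((Dfin (m + 1) X).filter (fun σ => σ a = Fin.last m ∧ Q σ)).card
      = ((Dfin m (X.erase ((a : ℕ) + 1))).filter
          (fun π => (Cc (a : ℕ) π ∧ (((a : ℕ) + 1 ∉ X) → Tl (a : ℕ) π)) ∧ Q' π)).card := by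
  apply Finset.card_bij' (fun σ _ => del a σ) (fun π _ => ins a π)
  · intro σ hσ
    have h := Finset.mem_filter.mp hσ
    have hσD : inSetAltDomain (m+1) X σ := mem_Dfin.mp h.1
    have hlast : σ a = Fin.last m := h.2.1
    have hQσ : Q σ := h.2.2
    obtain ⟨π, rfl⟩ := exists_ins hlast
    rw [del_ins]
    have h2 := (ins_mem_iff a X hX π).mp hσD
    exact Finset.mem_filter.mpr ⟨mem_Dfin.mpr h2.1, ⟨h2.2.1, h2.2.2⟩, (hQ π).mp hQσ⟩
  · intro π hπ
    have h := Finset.mem_filter.mp hπ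
    refine Finset.mem_filter.mpr ⟨mem_Dfin.mpr ?_, ins_apply_self a π, (hQ π).mpr h.2.2⟩
    exact (ins_mem_iff a X hX π).mpr ⟨mem_Dfin.mp h.1, h.2.1.1, h.2.1.2⟩
  · intro σ hσ
    exact ins_del a σ (Finset.mem_filter.mp hσ).2.1
  · intro π _
    exact del_ins a π
lemma ins_last_castSucc {m : ℕ} (π : Equiv.Perm (Fin m)) (y : Fin m) :
    ins (Fin.last m) π (y.castSucc) = (π y).castSucc := by
  have h := ins_apply_succAbove (Fin.last m) π y
  rwa [Fin.succAbove_last] at h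

lemma Cc_ins_last {m t : ℕ} (π : Equiv.Perm (Fin m)) :
    Cc t (ins (Fin.last m) π) ↔ Cc t π := by
  constructor
  · intro h y z hy hyz
    have h2 := h y.castSucc z.castSucc (by simpa using hy)
      (by simpa [Fin.castSucc_lt_castSucc_iff] using hyz)
    rw [ins_last_castSucc, ins_last_castSucc, Fin.castSucc_lt_castSucc_iff] at h2
    exact h2
  · intro h y z hy hyz
    rcases eq_or_ne z (Fin.last m) with hz | hz
    · have hy' : y ≠ Fin.last m := by rw [hz] at hyz; exact hyz.ne
      obtain ⟨y', rfl⟩ := Fin.exists_succAbove_eq hy'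
      rw [hz, ins_apply_self, ins_apply_succAbove]
      exact Fin.castSucc_lt_last _
    · have hzlt : z < Fin.last m := Fin.lt_last_iff_ne_last.mpr hz
      have hylt : y ≠ Fin.last m := (hyz.trans hzlt).ne
      obtain ⟨y', rfl⟩ := Fin.exists_succAbove_eq hylt
      obtain ⟨z', rfl⟩ := Fin.exists_succAbove_eq hz
      rw [ins_apply_succAbove, ins_apply_succAbove, Fin.castSucc_lt_castSucc_iff]
      refine h y' z' ?_ (Fin.succAbove_lt_succAbove_iff.mp hyz)
      · have : ((Fin.last m).succAbove y' : ℕ) = (y' : ℕ) := by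
          rw [Fin.succAbove_last]; simp
        omega
    
lemma Tl_ins_last {m t : ℕ} (π : Equiv.Perm (Fin m)) :
    Tl t (ins (Fin.last m) π) ↔ Tl t π := by
  constructor
  · intro h y z hyz hz
    have h2 := h y.castSucc z.castSucc (by simpa [Fin.castSucc_lt_castSucc_iff] using hyz)
      (by simpa using hz)
    rw [ins_last_castSucc, ins_last_castSucc, Fin.castSucc_lt_castSucc_iff] at h2
    exact h2
  · intro h y z hyz hz
    rcases eq_or_ne z (Fin.last m) with hz' | hz'
    · have hy' : y ≠ Fin.last m := by rw [hz'] at hyz; exact hyz.ne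
      obtain ⟨y', rfl⟩ := Fin.exists_succAbove_eq hy'
      rw [hz', ins_apply_self, ins_apply_succAbove]
      exact Fin.castSucc_lt_last _
    · have hzlt : z < Fin.last m := Fin.lt_last_iff_ne_last.mpr hz'
      have hylt : y ≠ Fin.last m := (hyz.trans hzlt).ne
      obtain ⟨y', rfl⟩ := Fin.exists_succAbove_eq hylt
      obtain ⟨z', rfl⟩ := Fin.exists_succAbove_eq hz'
      rw [ins_apply_succAbove, ins_apply_succAbove, Fin.castSucc_lt_castSucc_iff]
      refine h y' z' (Fin.succAbove_lt_succAbove_iff.mp hyz) ?_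
      · have : ((Fin.last m).succAbove z' : ℕ) = (z' : ℕ) := by
          rw [Fin.succAbove_last]; simp
        omega

lemma Tl_implies_last {m t : ℕ} (ht : t ≤ m) {σ : Equiv.Perm (Fin (m + 1))}
    (h : Tl t σ) : σ (Fin.last m) = Fin.last m := by
  by_contra hc
  have hx : σ.symm (Fin.last m) ≠ Fin.last m := by
    intro he
    exact hc (by conv_lhs => rw [← he]
                 rw [Equiv.apply_symm_apply])
  have hlt : σ.symm (Fin.last m) < Fin.last m := Fin.lt_last_iff_ne_last.mpr hx
  have h2 := h _ (Fin.last m) hlt (by simp [ht])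
  rw [Equiv.apply_symm_apply] at h2
  exact absurd h2 (Fin.not_lt.mpr (Fin.le_last _))

open Classical in
lemma card_decomp (m : ℕ) (X : Finset ℕ) (Q : Equiv.Perm (Fin (m + 1)) → Prop) :
    ((Dfin (m + 1) X).filter Q).card
      = ∑ v : Fin (m + 1),
          ((Dfin (m + 1) X).filter (fun σ => σ v = Fin.last m ∧ Q σ)).card := by
  rw [Finset.card_eq_sum_card_fiberwise
    (f := fun σ => σ.symm (Fin.last m)) (t := Finset.univ) (fun _ _ => Finset.mem_univ _)]
  apply Finset.sum_congr rfl
  intro v _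
  congr 1
  ext σ
  simp only [Finset.mem_filter]
  rw [Equiv.symm_apply_eq]
  constructor
  · rintro ⟨⟨h1, h2⟩, h3⟩
    exact ⟨h1, h3.symm, h2⟩
  · rintro ⟨h1, h2, h3⟩
    exact ⟨⟨h1, h3⟩, h2.symm⟩

open Classical in
lemma fiber_empty_of_lt {m w : ℕ} {X : Finset ℕ} (hwX : w ∈ X) (hwm : w ≤ m)
    {v : Fin (m + 1)} (hv : (v : ℕ) + 1 < w) (Q : Equiv.Perm (Fin (m + 1)) → Prop) :
    (Dfin (m + 1) X).filter (fun σ => σ v = Fin.last m ∧ Q σ) = ∅ := by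
  rw [Finset.eq_empty_iff_forall_notMem]
  intro σ hσ
  have h := Finset.mem_filter.mp hσ
  have hD := mem_Dfin.mp h.1
  have hlast := h.2.1
  have hj : v < (⟨w - 1, by omega⟩ : Fin (m + 1)) := by rw [Fin.lt_def]; simp; omega
  have hk : (⟨w - 1, by omega⟩ : Fin (m + 1)) < Fin.last m := by
    rw [Fin.lt_def]; simp [Fin.val_last]; omega
  have hmem : ((⟨w - 1, by omega⟩ : Fin (m + 1)) : ℕ) + 1 ∈ X := by
    show w - 1 + 1 ∈ X
    have heq : w - 1 + 1 = w := by omega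
    rw [heq]; exact hwX
  have H := (hD v ⟨w - 1, by omega⟩ (Fin.last m) hj hk).1 hmem
  apply H
  constructor
  · rw [hlast]
    refine Fin.lt_last_iff_ne_last.mpr (fun hc => ?_)
    exact hj.ne' (σ.injective (hc.trans hlast.symm))
  · rw [hlast]
    refine Fin.lt_last_iff_ne_last.mpr (fun hc => ?_)
    exact (hj.trans hk).ne' (σ.injective (hc.trans hlast.symm))

lemma Cc_of_fiber {m w : ℕ} {X : Finset ℕ} (hX : ∀ x ∈ X, x < w) {v : Fin (m + 1)}
    (hv : (v : ℕ) + 1 < w) {σ : Equiv.Perm (Fin (m + 1))}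
    (hσ : inSetAltDomain (m + 1) X σ) (hlast : σ v = Fin.last m) : Cc (w - 1) σ := by
  intro y z hy hyz
  have hvy : v < y := by rw [Fin.lt_def]; omega
  have hname : ((y : ℕ) + 1) ∉ X := fun hc => by have := hX _ hc; omega
  have H := (hσ v y z hvy hyz).2 hname
  have h1 : σ z < σ v := by
    rw [hlast]
    refine Fin.lt_last_iff_ne_last.mpr (fun hc => ?_)
    exact (hvy.trans hyz).ne' (σ.injective (hc.trans hlast.symm))
  have h2 : ¬(σ z < σ y) := fun hc => H ⟨h1, hc⟩
  exact lt_of_le_of_ne (Fin.not_lt.mp h2) (σ.injective.ne hyz.ne)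

open Classical in
lemma Cc_fiber_empty {m w : ℕ} (X : Finset ℕ) {v : Fin (m + 1)} (hv : w - 1 ≤ (v : ℕ))
    (hvlast : v ≠ Fin.last m) :
    (Dfin (m + 1) X).filter (fun σ => σ v = Fin.last m ∧ Cc (w - 1) σ) = ∅ := by
  rw [Finset.eq_empty_iff_forall_notMem]
  intro σ hσ
  have h := Finset.mem_filter.mp hσ
  have hlast := h.2.1
  have hC := h.2.2
  have h2 := hC v (Fin.last m) hv (Fin.lt_last_iff_ne_last.mpr hvlast)
  rw [hlast] at h2
  exact absurd h2 (Fin.not_lt.mpr (Fin.le_last _))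

open Classical in
lemma tail_card (t : ℕ) (X : Finset ℕ) (hX : ∀ x ∈ X, 1 ≤ x ∧ x ≤ t) :
    ∀ m, t ≤ m → ((Dfin m X).filter (fun π => Tl t π)).card = fsize t X := by
  refine Nat.le_induction ?_ ?_
  · rw [fsize_eq_card]
    congr 1
    apply Finset.filter_true_of_mem
    intro π _ y z hyz hz
    exact absurd hz (by omega)
  · intro m hm IH
    have hstep : (Dfin (m + 1) X).filter (fun π => Tl t π)
        = (Dfin (m + 1) X).filter (fun σ => σ (Fin.last m) = Fin.last m ∧ Tl t σ) := by
      apply Finset.filter_congr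
      intro σ _
      exact ⟨fun h => ⟨Tl_implies_last hm h, h⟩, fun h => h.2⟩
    rw [hstep, fiber_card (Fin.last m) X
      (fun x hx => by have := (hX x hx).2; simp [Fin.val_last]; omega)
      (Tl t) (Tl t) (fun π => Tl_ins_last π)]
    have h1 : X.erase (((Fin.last m : Fin (m + 1)) : ℕ) + 1) = X := by
      apply Finset.erase_eq_of_notMem
      intro hc
      have := (hX _ hc).2
      simp [Fin.val_last] at this
      omega
    rw [h1, ← IH]
    congr 1
    apply Finset.filter_congr
    intro π _
    constructor
    · rintro ⟨_, h2⟩; exact h2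
    · intro h2
      refine ⟨⟨?_, fun _ y z hyz hz => ?_⟩, h2⟩
      · intro y z hy hyz
        exfalso
        have := y.isLt
        simp [Fin.val_last] at hy
        omega
      · exfalso
        have := z.isLt
        simp [Fin.val_last] at hz
        omega
def TrueP {α : Sort*} : α → Prop := fun _ => True

lemma truep {α : Sort*} (x : α) : TrueP x := trivial

open Classical in
lemma Eq1 (m w : ℕ) (A : Finset ℕ) (hwm : w ≤ m)
    (hA : ∀ x ∈ A, 1 ≤ x ∧ x ≤ w) (hwA : w ∈ A) :
    fsize (m + 1) A
      = ((Dfin m (A.erase w)).filter (fun π => Cc (w - 1) π)).card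
        + ∑ j ∈ Finset.Icc w m, fsize j A := by
  have hw : 1 ≤ w := (hA w hwA).1
  set G : ℕ → ℕ := fun j =>
    if j + 1 < w then 0
    else if j + 1 = w then ((Dfin m (A.erase w)).filter (fun π => Cc (w - 1) π)).card
    else fsize j A with hG
  have hfib : ∀ v : Fin (m + 1),
      ((Dfin (m + 1) A).filter (fun σ => σ v = Fin.last m ∧ TrueP σ)).card = G (v : ℕ) := by
    intro v
    by_cases h1 : (v : ℕ) + 1 < w
    · rw [fiber_empty_of_lt hwA hwm h1 TrueP]
      simp [hG, h1]
    · by_cases h2 : (v : ℕ) + 1 = w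
      · rw [fiber_card v A (fun x hx => by have := (hA x hx).2; omega)
          TrueP TrueP (fun _ => Iff.rfl)]
        have hv : (v : ℕ) = w - 1 := by omega
        rw [h2, hv]
        have hfc : Finset.filter
              (fun π => (Cc (w-1) π ∧ (w ∉ A → Tl (w-1) π)) ∧ TrueP π) (Dfin m (A.erase w))
            = Finset.filter (fun π => Cc (w - 1) π) (Dfin m (A.erase w)) := by
          apply Finset.filter_congr
          intro π _
          constructor
          · rintro ⟨⟨hc, _⟩, _⟩; exact hc
          · intro hc; exact ⟨⟨hc, fun hc2 => absurd hwA hc2⟩, truep _⟩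
        rw [hfc, hG]
        simp only []
        rw [if_neg (by omega), if_pos (by omega)]
      · have h3 : w ≤ (v : ℕ) := by omega
        rw [fiber_card v A (fun x hx => by have := (hA x hx).2; omega)
          TrueP TrueP (fun _ => Iff.rfl)]
        have he : A.erase ((v : ℕ) + 1) = A :=
          Finset.erase_eq_of_notMem (fun hc => by have := (hA _ hc).2; omega)
        rw [he]
        have hfc : Finset.filter
              (fun π => (Cc (v : ℕ) π ∧ ((v : ℕ) + 1 ∉ A → Tl (v : ℕ) π)) ∧ TrueP π) (Dfin m A)
            = Finset.filter (fun π => Tl (v : ℕ) π) (Dfin m A) := by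
          apply Finset.filter_congr
          intro π _
          constructor
          · rintro ⟨⟨_, ht⟩, _⟩
            exact ht (fun hc2 => by have := (hA _ hc2).2; omega)
          · intro ht; exact ⟨⟨ht.cc, fun _ => ht⟩, truep _⟩
        rw [hfc, tail_card (v : ℕ) A (fun x hx => ⟨(hA x hx).1, le_trans (hA x hx).2 h3⟩)
          m (by omega)]
        rw [hG]
        simp only []
        rw [if_neg h1, if_neg h2]
  have hdec := card_decomp m A TrueP
  rw [Finset.filter_true_of_mem (fun x _ => truep x)] at hdec
  rw [fsize_eq_card, hdec, Finset.sum_congr rfl (fun v _ => hfib v),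
    Fin.sum_univ_eq_sum_range G (m + 1), Finset.range_eq_Ico,
    ← Finset.sum_Ico_consecutive G (Nat.zero_le (w - 1)) (by omega : w - 1 ≤ m + 1)]
  have hzero : ∑ j ∈ Finset.Ico 0 (w - 1), G j = 0 := by
    apply Finset.sum_eq_zero
    intro j hj
    have := (Finset.mem_Ico.mp hj).2
    rw [hG]
    simp only []
    rw [if_pos (by omega)]
  rw [hzero, zero_add, Finset.sum_eq_sum_Ico_succ_bot (by omega : w - 1 < m + 1) G]
  have hGw : G (w - 1) = ((Dfin m (A.erase w)).filter (fun π => Cc (w - 1) π)).card := by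
    rw [hG]; simp only []
    rw [if_neg (by omega), if_pos (by omega)]
  have hIco : Finset.Ico (w - 1 + 1) (m + 1) = Finset.Icc w m := by
    have : w - 1 + 1 = w := by omega
    rw [this, Finset.Ico_add_one_right_eq_Icc]
  rw [hGw, hIco]
  congr 1
  apply Finset.sum_congr rfl
  intro j hj
  have hj' := Finset.mem_Icc.mp hj
  rw [hG]
  simp only []
  rw [if_neg (by omega), if_neg (by omega)]
open Classical in
lemma Eq3 (m w : ℕ) (B : Finset ℕ) (hw : 2 ≤ w) (hwm : w ≤ m)
    (hB : ∀ x ∈ B, 1 ≤ x ∧ x ≤ w - 1) :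
    fsize (m + 1) B + ((Dfin m B).filter (fun π => Cc (w - 1) π)).card
      = ((Dfin (m + 1) B).filter (fun π => Cc (w - 1) π)).card
        + ∑ j ∈ Finset.Icc (w - 1) m, fsize j B := by
  have hBw : ∀ x ∈ B, x < w := fun x hx => by have := (hB x hx).2; omega
  have hdecF : (Dfin (m + 1) B).card
      = ∑ v : Fin (m + 1),
          ((Dfin (m + 1) B).filter (fun σ => σ v = Fin.last m ∧ TrueP σ)).card := by
    have h := card_decomp m B TrueP
    rwa [Finset.filter_true_of_mem (fun x _ => truep x)] at h
  have hdecG : ((Dfin (m + 1) B).filter (fun π => Cc (w - 1) π)).card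
      = ∑ v : Fin (m + 1),
          ((Dfin (m + 1) B).filter (fun σ => σ v = Fin.last m ∧ Cc (w - 1) σ)).card :=
    card_decomp m B (fun π => Cc (w - 1) π)
  have key : ∀ v : Fin (m + 1),
      ((Dfin (m + 1) B).filter (fun σ => σ v = Fin.last m ∧ TrueP σ)).card
        + (if v = Fin.last m then ((Dfin m B).filter (fun π => Cc (w - 1) π)).card else 0)
      = ((Dfin (m + 1) B).filter (fun σ => σ v = Fin.last m ∧ Cc (w - 1) σ)).card
        + (if w - 1 ≤ (v : ℕ) then fsize (v : ℕ) B else 0) := by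
    intro v
    by_cases h1 : (v : ℕ) + 1 < w
    · have hvne : v ≠ Fin.last m := by
        intro hc
        have := congrArg Fin.val hc
        simp [Fin.val_last] at this
        omega
      rw [if_neg hvne, if_neg (by omega : ¬ (w - 1 ≤ (v : ℕ)))]
      simp only [add_zero]
      congr 1
      apply Finset.filter_congr
      intro σ hσ
      constructor
      · rintro ⟨ha, _⟩
        exact ⟨ha, Cc_of_fiber hBw h1 (mem_Dfin.mp hσ) ha⟩
      · rintro ⟨ha, _⟩
        exact ⟨ha, truep _⟩
    · by_cases h2 : v = Fin.last m
      · subst h2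
        rw [if_pos rfl, if_pos (by simp [Fin.val_last]; omega)]
        have hX : ∀ x ∈ B, x ≤ ((Fin.last m : Fin (m + 1)) : ℕ) + 1 := by
          intro x hx
          have := (hB x hx).2
          simp [Fin.val_last]
          omega
        have hErase : B.erase (m + 1) = B :=
          Finset.erase_eq_of_notMem (fun hc => by have := (hB _ hc).2; omega)
        have hf1 : ((Dfin (m + 1) B).filter
              (fun σ => σ (Fin.last m) = Fin.last m ∧ TrueP σ)).card
            = ((Dfin m (B.erase (m + 1))).filter
                (fun π => (Cc m π ∧ (m + 1 ∉ B → Tl m π)) ∧ TrueP π)).card :=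
          fiber_card (Fin.last m) B hX TrueP TrueP (fun _ => Iff.rfl)
        have hf2 : ((Dfin (m + 1) B).filter
              (fun σ => σ (Fin.last m) = Fin.last m ∧ Cc (w - 1) σ)).card
            = ((Dfin m (B.erase (m + 1))).filter
                (fun π => (Cc m π ∧ (m + 1 ∉ B → Tl m π)) ∧ Cc (w - 1) π)).card :=
          fiber_card (Fin.last m) B hX (fun π => Cc (w - 1) π) (fun π => Cc (w - 1) π)
            (fun π => Cc_ins_last π)
        rw [hErase] at hf1 hf2
        have hvac : ∀ π : Equiv.Perm (Fin m), Cc m π ∧ (m + 1 ∉ B → Tl m π) := by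
          intro π
          constructor
          · intro y z hy hyz
            exact absurd hy (by have := y.isLt; omega)
          · intro _ y z hyz hz
            exact absurd hz (by have := z.isLt; omega)
        have hff1 : Finset.filter
              (fun π => (Cc m π ∧ (m + 1 ∉ B → Tl m π)) ∧ TrueP π) (Dfin m B) = Dfin m B := by
          apply Finset.filter_true_of_mem
          intro π _
          exact ⟨hvac π, truep _⟩
        have hff2 : Finset.filter
              (fun π => (Cc m π ∧ (m + 1 ∉ B → Tl m π)) ∧ Cc (w - 1) π) (Dfin m B)
            = Finset.filter (fun π => Cc (w - 1) π) (Dfin m B) := by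
          apply Finset.filter_congr
          intro π _
          exact ⟨fun h => h.2, fun h => ⟨hvac π, h⟩⟩
        rw [hff1] at hf1
        rw [hff2] at hf2
        rw [hf1, hf2, ← fsize_eq_card]
        have : ((Fin.last m : Fin (m + 1)) : ℕ) = m := Fin.val_last m
        rw [this]
        omega
      · have h3 : w - 1 ≤ (v : ℕ) := by omega
        have hvm : (v : ℕ) ≠ m := by
          intro hc
          exact h2 (Fin.ext (by simp [Fin.val_last, hc]))
        have h4 : (v : ℕ) < m := by have := v.isLt; omega
        rw [if_neg h2, if_pos h3, Cc_fiber_empty B h3 h2]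
        have hX : ∀ x ∈ B, x ≤ (v : ℕ) + 1 := fun x hx => by have := (hB x hx).2; omega
        have hf : ((Dfin (m + 1) B).filter
              (fun σ => σ v = Fin.last m ∧ TrueP σ)).card
            = ((Dfin m (B.erase ((v : ℕ) + 1))).filter
                (fun π => (Cc (v : ℕ) π ∧ ((v : ℕ) + 1 ∉ B → Tl (v : ℕ) π)) ∧ TrueP π)).card :=
          fiber_card v B hX TrueP TrueP (fun _ => Iff.rfl)
        have hErase : B.erase ((v : ℕ) + 1) = B :=
          Finset.erase_eq_of_notMem (fun hc => by have := (hB _ hc).2; omega)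
        rw [hErase] at hf
        have hnm : (v : ℕ) + 1 ∉ B := fun hc => by have := (hB _ hc).2; omega
        have hff : Finset.filter
              (fun π => (Cc (v : ℕ) π ∧ ((v : ℕ) + 1 ∉ B → Tl (v : ℕ) π)) ∧ TrueP π) (Dfin m B)
            = Finset.filter (fun π => Tl (v : ℕ) π) (Dfin m B) := by
          apply Finset.filter_congr
          intro π _
          constructor
          · rintro ⟨⟨_, ht⟩, _⟩
            exact ht hnm
          · intro ht
            exact ⟨⟨ht.cc, fun _ => ht⟩, truep _⟩
        rw [hff] at hf
        rw [hf, tail_card (v : ℕ) B (fun x hx => ⟨(hB x hx).1, by have := (hB x hx).2; omega⟩)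
          m (by omega)]
        simp
  have hsum : ∑ v : Fin (m + 1),
        (((Dfin (m + 1) B).filter (fun σ => σ v = Fin.last m ∧ TrueP σ)).card
          + (if v = Fin.last m then ((Dfin m B).filter (fun π => Cc (w - 1) π)).card else 0))
      = ∑ v : Fin (m + 1),
        (((Dfin (m + 1) B).filter (fun σ => σ v = Fin.last m ∧ Cc (w - 1) σ)).card
          + (if w - 1 ≤ (v : ℕ) then fsize (v : ℕ) B else 0)) :=
    Finset.sum_congr rfl (fun v _ => key v)
  rw [Finset.sum_add_distrib, Finset.sum_add_distrib] at hsum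
  rw [Finset.sum_ite_eq' Finset.univ (Fin.last m)
    (fun _ => ((Dfin m B).filter (fun π => Cc (w - 1) π)).card)] at hsum
  rw [if_pos (Finset.mem_univ _)] at hsum
  have hite : ∑ v : Fin (m + 1), (if w - 1 ≤ (v : ℕ) then fsize (v : ℕ) B else 0)
      = ∑ j ∈ Finset.Icc (w - 1) m, fsize j B := by
    rw [Fin.sum_univ_eq_sum_range (fun j => if w - 1 ≤ j then fsize j B else 0) (m + 1)]
    rw [Finset.range_eq_Ico,
      ← Finset.sum_Ico_consecutive _ (Nat.zero_le (w - 1)) (by omega : w - 1 ≤ m + 1)]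
    have hz : ∑ j ∈ Finset.Ico 0 (w - 1), (if w - 1 ≤ j then fsize j B else 0) = 0 := by
      apply Finset.sum_eq_zero
      intro j hj
      have := (Finset.mem_Ico.mp hj).2
      rw [if_neg (by omega)]
    rw [hz, zero_add]
    have hIcc : Finset.Ico (w - 1) (m + 1) = Finset.Icc (w - 1) m := Finset.Ico_add_one_right_eq_Icc _ _
    rw [hIcc]
    apply Finset.sum_congr rfl
    intro j hj
    rw [if_pos (Finset.mem_Icc.mp hj).1]
  rw [hite] at hsum
  rw [fsize_eq_card, hdecF, hdecG]
  omega
/-- if `w = max A` with `1 < w < n-1` and `A' = A \ {w}`, then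
`f_n(A) = 2·f_{n-1}(A) + f_{n-1}(A') - Σ_{j=w-1}^{n-2} f_j(A')`. -/
theorem stmt6 (n : ℕ) (hn : 3 ≤ n) (A : Finset ℕ) (hA : A ⊆ Finset.Icc 1 n)
    (hne : A.Nonempty) (w : ℕ) (hw : w = A.max' hne) (hw1 : 1 < w)
    (hw2 : w < n - 1) :
    (fsize n A : ℤ)
      = 2 * (fsize (n-1) A : ℤ) + (fsize (n-1) (A.erase w) : ℤ)
        - ∑ j ∈ Finset.Icc (w-1) (n-2), (fsize j (A.erase w) : ℤ) := by
  have hwA : w ∈ A := by rw [hw]; exact A.max'_mem hne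
  have hbounds : ∀ x ∈ A, 1 ≤ x ∧ x ≤ w := by
    intro x hx
    refine ⟨(Finset.mem_Icc.mp (hA hx)).1, ?_⟩
    rw [hw]
    exact Finset.le_max' A x hx
  obtain ⟨k, rfl⟩ : ∃ k, n = k + 2 := ⟨n - 2, by omega⟩
  have hwk : w ≤ k := by omega
  have hw2' : 2 ≤ w := hw1
  have hBb : ∀ x ∈ A.erase w, 1 ≤ x ∧ x ≤ w - 1 := by
    intro x hx
    have h1 := Finset.mem_of_mem_erase hx
    have h2 := Finset.ne_of_mem_erase hx
    have h3 := hbounds x h1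
    exact ⟨h3.1, by omega⟩
  have E1a := Eq1 (k + 1) w A (by omega) hbounds hwA
  have E1b := Eq1 k w A hwk hbounds hwA
  have E3 := Eq3 k w (A.erase w) hw2' hwk hBb
  have hsplit : ∑ j ∈ Finset.Icc w (k + 1), fsize j A
      = (∑ j ∈ Finset.Icc w k, fsize j A) + fsize (k + 1) A :=
    Finset.sum_Icc_succ_top (by omega) _
  rw [hsplit] at E1a
  have e1 : k + 2 - 1 = k + 1 := by omega
  have e2 : k + 2 - 2 = k := by omega
  rw [e1, e2]
  zify at E1a E1b E3
  linarith [E1a, E1b, E3]
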